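/- Suppose the monic polynomial M^k + B_1(z) M^{k-1} + \cdots + B_k(z) over the field of meromorphic functions on \mathbb{C} factors as P \cdot Q with P, Q monic of degrees q and k - q (0 < q < k), and that on some domain U the roots of the full polynomial are holomorphic functions F_1, \ldots, F_k whose derivatives F_j' = w_j are the k distinct roots on U of an irreducible polynomial W^k + A_1(z) W^{k-1} + \cdots + A_k(z) with meromorphic coefficients. Then the derivatives of the roots of P on U are roots of a monic polynomial of degree q < k with meromorphic coefficients dividing W^k + A_1 W^{k-1} + \cdots + A_k, contradicting irreducibility. Hence M^k + B_1 M^{k-1} + \cdots + B_k is irreducible. -/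

import Mathlib

open Complex Finset Set

section Helpers
open Filter Topology Polynomial Matrix

/-- Finite sums of meromorphic functions are meromorphic. -/
lemma meroAt_sum {ι : Type*} (s : Finset ι) (f : ι → ℂ → ℂ) {x : ℂ}
    (h : ∀ i ∈ s, MeromorphicAt (f i) x) :
    MeromorphicAt (fun z => ∑ i ∈ s, f i z) x := by
  classical
  induction s using Finset.cons_induction with
  | empty => simpa using MeromorphicAt.const 0 x
  | cons a s ha ih =>
    simp only [Finset.sum_cons]
    exact (h a (Finset.mem_cons_self a s)).add
      (ih fun i hi => h i (Finset.mem_cons_of_mem hi))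

/-- Finite products of meromorphic functions are meromorphic. -/
lemma meroAt_prod {ι : Type*} (s : Finset ι) (f : ι → ℂ → ℂ) {x : ℂ}
    (h : ∀ i ∈ s, MeromorphicAt (f i) x) :
    MeromorphicAt (fun z => ∏ i ∈ s, f i z) x := by
  classical
  induction s using Finset.cons_induction with
  | empty => simpa using MeromorphicAt.const 1 x
  | cons a s ha ih =>
    simp only [Finset.prod_cons]
    exact (h a (Finset.mem_cons_self a s)).mul
      (ih fun i hi => h i (Finset.mem_cons_of_mem hi))

lemma analyticAt_fsum {ι : Type*} (s : Finset ι) (f : ι → ℂ → ℂ) {x : ℂ}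
    (h : ∀ i ∈ s, AnalyticAt ℂ (f i) x) :
    AnalyticAt ℂ (fun z => ∑ i ∈ s, f i z) x := by
  classical
  induction s using Finset.cons_induction with
  | empty => simpa using analyticAt_const (v := (0:ℂ))
  | cons a s ha ih =>
    simp only [Finset.sum_cons]
    exact (h a (Finset.mem_cons_self a s)).add
      (ih fun i hi => h i (Finset.mem_cons_of_mem hi))

lemma analyticAt_fprod {ι : Type*} (s : Finset ι) (f : ι → ℂ → ℂ) {x : ℂ}
    (h : ∀ i ∈ s, AnalyticAt ℂ (f i) x) :
    AnalyticAt ℂ (fun z => ∏ i ∈ s, f i z) x := by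
  classical
  induction s using Finset.cons_induction with
  | empty => simpa using analyticAt_const (v := (1:ℂ))
  | cons a s ha ih =>
    simp only [Finset.prod_cons]
    exact (h a (Finset.mem_cons_self a s)).mul
      (ih fun i hi => h i (Finset.mem_cons_of_mem hi))

/-- If a meromorphic function vanishes frequently near a point, it vanishes on a
punctured neighborhood. -/
lemma mero_evtZero_of_freq {f : ℂ → ℂ} {z : ℂ} (hf : MeromorphicAt f z)
    (h : ∃ᶠ w in 𝓝[≠] z, f w = 0) : ∀ᶠ w in 𝓝[≠] z, f w = 0 := by
  obtain ⟨n, hn⟩ := hf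
  have hg : ∃ᶠ w in 𝓝[≠] z, (w - z) ^ n • f w = 0 :=
    h.mono (fun w hw => by simp [hw])
  have := hn.frequently_zero_iff_eventually_zero.1 hg
  have h2 : ∀ᶠ w in 𝓝[≠] z, (w - z) ^ n • f w = 0 :=
    nhdsWithin_le_nhds this
  filter_upwards [h2, self_mem_nhdsWithin] with w hw hw'
  have hwz : w - z ≠ 0 := sub_ne_zero.2 hw'
  have : (w - z) ^ n * f w = 0 := by simpa [smul_eq_mul] using hw
  rcases mul_eq_zero.1 this with h' | h'
  · exact absurd h' (pow_ne_zero n hwz)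
  · exact h'

/-- Identity theorem for meromorphic functions on a connected open set. -/
lemma mero_idThm {U : Set ℂ} (hU : IsOpen U) (hUc : IsPreconnected U) {f : ℂ → ℂ}
    (hf : MeromorphicOn f U) {z₀ : ℂ} (hz₀ : z₀ ∈ U)
    (h : ∃ᶠ w in 𝓝[≠] z₀, f w = 0) :
    ∀ z ∈ U, ∀ᶠ w in 𝓝[≠] z, f w = 0 := by
  set S := {z : ℂ | ∀ᶠ w in 𝓝[≠] z, f w = 0} with hS
  have hSopen : IsOpen S := by
    rw [isOpen_iff_mem_nhds]
    intro z hz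
    have hz' : ∀ᶠ w in 𝓝[≠] z, f w = 0 := hz
    rw [eventually_nhdsWithin_iff, eventually_nhds_iff] at hz'
    obtain ⟨t, ht0, htopen, htz⟩ := hz'
    rw [mem_nhds_iff]
    refine ⟨t, fun w hw => ?_, htopen, htz⟩
    by_cases hwz : w = z
    · subst hwz
      rw [hS, Set.mem_setOf_eq, eventually_nhdsWithin_iff, eventually_nhds_iff]
      exact ⟨t, ht0, htopen, htz⟩
    · rw [hS, Set.mem_setOf_eq, eventually_nhdsWithin_iff, eventually_nhds_iff]
      refine ⟨t \ {z}, fun y hy _ => ht0 y hy.1 hy.2, htopen.sdiff isClosed_singleton, ⟨hw, hwz⟩⟩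
  have hclosure : closure S ∩ U ⊆ S := by
    rintro z ⟨hzc, hzU⟩
    by_cases hzS : z ∈ S
    · exact hzS
    refine mero_evtZero_of_freq (hf z hzU) ?_
    rw [frequently_iff]
    intro V hV
    rw [mem_nhdsWithin] at hV
    obtain ⟨o, hoopen, hzo, hoV⟩ := hV
    obtain ⟨w, hwo, hwS⟩ := mem_closure_iff.1 hzc o hoopen hzo
    have hwz : w ≠ z := fun hwz => hzS (hwz ▸ hwS)
    have h1 : ∀ᶠ y in 𝓝[≠] w, f y = 0 := hwS
    have h2 : ∀ᶠ y in 𝓝[≠] w, y ∈ o \ {z} :=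
      nhdsWithin_le_nhds ((hoopen.sdiff isClosed_singleton).mem_nhds ⟨hwo, hwz⟩)
    obtain ⟨y, hy1, hy2⟩ := (h1.and h2).exists
    exact ⟨y, hoV ⟨hy2.1, hy2.2⟩, hy1⟩
  have hz₀S : z₀ ∈ S := mero_evtZero_of_freq (hf z₀ hz₀) h
  have : U ⊆ S :=
    hUc.subset_of_closure_inter_subset hSopen ⟨z₀, hz₀, hz₀S⟩ hclosure
  exact fun z hz => this hz

/-- Global identity theorem: a meromorphic function on `ℂ` vanishing frequently near a
point vanishes codiscretely. -/
lemma mero_idThm_codiscrete {f : ℂ → ℂ} (hf : MeromorphicOn f Set.univ) {z₀ : ℂ}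
    (h : ∃ᶠ w in 𝓝[≠] z₀, f w = 0) : ∀ᶠ z in Filter.codiscrete ℂ, f z = 0 := by
  have := mero_idThm isOpen_univ isPreconnected_univ hf (Set.mem_univ z₀) h
  show {z : ℂ | f z = 0} ∈ Filter.codiscrete ℂ
  rw [mem_codiscrete]
  intro x
  rw [Filter.disjoint_principal_right, compl_compl]
  exact this x (Set.mem_univ x)
open Complex Finset Set Filter Topology Polynomial Matrix

/-- The derivative of a meromorphic function is meromorphic. -/
lemma meroAt_deriv {f : ℂ → ℂ} {x : ℂ} (hf : MeromorphicAt f x) :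
    MeromorphicAt (deriv f) x := by
  obtain ⟨n, hn⟩ := hf
  set g : ℂ → ℂ := fun w => (w - x) ^ n * f w with hgdef
  have hg : AnalyticAt ℂ g x := by simpa [smul_eq_mul] using hn
  obtain ⟨t, htan, htopen, htx⟩ := eventually_nhds_iff.1 hg.eventually_analyticAt
  have hgt : AnalyticOnNhd ℂ g t := fun y hy => htan y hy
  set H : ℂ → ℂ := fun w =>
    (-(((n:ℂ)) * (w - x) ^ (n - 1) * 1) / ((w - x) ^ n) ^ 2) * g w
      + ((w - x) ^ n)⁻¹ * deriv g w with hHdef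
  have hHmero : MeromorphicAt H x := by
    apply MeromorphicAt.add
    · apply MeromorphicAt.mul
      · apply MeromorphicAt.div
        · apply MeromorphicAt.neg
          exact (((MeromorphicAt.const ((n:ℂ)) x).mul
            (((MeromorphicAt.id x).sub (MeromorphicAt.const x x)).pow (n-1))).mul
            (MeromorphicAt.const 1 x))
        · exact (((MeromorphicAt.id x).sub (MeromorphicAt.const x x)).pow n).pow 2
      · exact hg.meromorphicAt
    · apply MeromorphicAt.mul
      · exact (((MeromorphicAt.id x).sub (MeromorphicAt.const x x)).pow n).inv
      · exact ((hgt.deriv_of_isOpen htopen) x htx).meromorphicAt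
  apply hHmero.congr
  have hmem : t \ {x} ∈ 𝓝[≠] x := by
    rw [mem_nhdsWithin]
    exact ⟨t, htopen, htx, fun y hy => ⟨hy.1, hy.2⟩⟩
  filter_upwards [hmem] with w hw
  obtain ⟨hwt, hwx⟩ := hw
  have hwx' : w ≠ x := hwx
  have hsub : w - x ≠ 0 := sub_ne_zero.2 hwx'
  -- HasDerivAt computations
  have hpow : HasDerivAt (fun y : ℂ => (y - x) ^ n) ((n:ℂ) * (w - x) ^ (n - 1) * 1) w := by
    exact (((hasDerivAt_id w).sub_const x).pow n)
  have hinv : HasDerivAt (fun y : ℂ => ((y - x) ^ n)⁻¹)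
      (-((n:ℂ) * (w - x) ^ (n - 1) * 1) / ((w - x) ^ n) ^ 2) w :=
    hpow.inv (pow_ne_zero n hsub)
  have hgw : HasDerivAt g (deriv g w) w :=
    ((hgt w hwt).differentiableAt).hasDerivAt
  have hprod : HasDerivAt (fun y => ((y - x) ^ n)⁻¹ * g y)
      ((-((n:ℂ) * (w - x) ^ (n - 1) * 1) / ((w - x) ^ n) ^ 2) * g w
        + ((w - x) ^ n)⁻¹ * deriv g w) w := hinv.mul hgw
  have hfeq : f =ᶠ[𝓝 w] fun y => ((y - x) ^ n)⁻¹ * g y := by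
    have : ∀ y ∈ ({x}ᶜ : Set ℂ), f y = ((y - x) ^ n)⁻¹ * g y := by
      intro y hy
      have : y - x ≠ 0 := sub_ne_zero.2 hy
      rw [hgdef]
      field_simp
    filter_upwards [isOpen_compl_singleton.mem_nhds (by exact hwx' : w ∈ ({x}ᶜ : Set ℂ))] with
      y hy using this y hy
  have : HasDerivAt f ((-((n:ℂ) * (w - x) ^ (n - 1) * 1) / ((w - x) ^ n) ^ 2) * g w
      + ((w - x) ^ n)⁻¹ * deriv g w) w := hprod.congr_of_eventuallyEq hfeq
  rw [hHdef]
  exact (this.deriv).symm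

/-- The Vandermonde matrix at the nodes `0, 1, …, q`. -/
noncomputable def Wmat (q : ℕ) : Matrix (Fin (q+1)) (Fin (q+1)) ℂ :=
  Matrix.vandermonde (fun i => ((i : ℕ) : ℂ))

lemma Wmat_det_ne (q : ℕ) : (Wmat q).det ≠ 0 := by
  rw [Wmat, Matrix.det_vandermonde]
  apply Finset.prod_ne_zero_iff.2
  intro i _
  apply Finset.prod_ne_zero_iff.2
  intro j hj
  have hij : i < j := Finset.mem_Ioi.1 hj
  have : (i : ℕ) < (j : ℕ) := hij
  have : ((i : ℕ) : ℂ) ≠ ((j : ℕ) : ℂ) := by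
    exact_mod_cast Nat.ne_of_lt this
  exact sub_ne_zero.2 (Ne.symm this)

/-- Coefficients of a polynomial of degree at most `q` are universal linear combinations
of its values at the nodes `0, 1, …, q`. -/
lemma coeff_eq_interp (q : ℕ) (p : ℂ[X]) (hp : p.natDegree ≤ q) (j : Fin (q+1)) :
    p.coeff (j : ℕ) = ∑ i : Fin (q+1), (Wmat q)⁻¹ j i * p.eval ((i : ℕ) : ℂ) := by
  classical
  set u : Fin (q+1) → ℂ := fun j => p.coeff (j : ℕ) with hu
  have hmv : (Wmat q).mulVec u = fun i : Fin (q+1) => p.eval (((i : ℕ) : ℂ)) := by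
    funext i
    rw [Polynomial.eval_eq_sum_range' (lt_of_le_of_lt hp (Nat.lt_succ_self q))]
    rw [Matrix.mulVec, dotProduct]
    rw [Finset.sum_range fun m => p.coeff m * ((i:ℕ):ℂ) ^ m]
    apply Finset.sum_congr rfl
    intro m _
    simp [Wmat, Matrix.vandermonde, hu, mul_comm]
  have hinv : (Wmat q)⁻¹.mulVec ((Wmat q).mulVec u) = u := by
    rw [Matrix.mulVec_mulVec, Matrix.nonsing_inv_mul _ (isUnit_iff_ne_zero.2 (Wmat_det_ne q)),
      Matrix.one_mulVec]
  have := congrFun hinv j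
  rw [hmv] at this
  rw [show p.coeff (j:ℕ) = u j from rfl, ← this]
  rw [Matrix.mulVec, dotProduct]
open Complex Finset Set Filter Topology Polynomial Matrix

/-- A monic divisor of a product of linear factors is a subproduct. -/
lemma monic_dvd_prod_linear {ι : Type*} [DecidableEq ι] (c : ι → ℂ) :
    ∀ (n : ℕ) (P : ℂ[X]) (s : Finset ι), P.natDegree = n → P.Monic →
      P ∣ ∏ j ∈ s, (X - C (c j)) → ∃ T ⊆ s, P = ∏ t ∈ T, (X - C (c t)) := by
  intro n
  induction n with
  | zero =>
    intro P s hdeg hmonic _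
    exact ⟨∅, Finset.empty_subset s, by rw [Finset.prod_empty]; exact hmonic.natDegree_eq_zero.1 hdeg⟩
  | succ n ih =>
    intro P s hdeg hmonic hdvd
    have hdegpos : 0 < P.degree :=
      natDegree_pos_iff_degree_pos.mp (by omega)
    obtain ⟨r, hr⟩ := Complex.exists_root hdegpos
    have hroot : (∏ j ∈ s, (X - C (c j))).IsRoot r := by
      obtain ⟨Q, hQ⟩ := hdvd
      rw [IsRoot, hQ, eval_mul, hr, zero_mul]
    obtain ⟨j, hjs, hj⟩ : ∃ j ∈ s, c j = r := by
      rw [IsRoot, eval_prod] at hroot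
      obtain ⟨j, hjs, hj0⟩ := Finset.prod_eq_zero_iff.1 hroot
      have : r - c j = 0 := by simpa using hj0
      exact ⟨j, hjs, (sub_eq_zero.1 this).symm⟩
    -- factor out X - C (c j)
    have hdvd1 : X - C (c j) ∣ P := by
      rw [dvd_iff_isRoot, hj]; exact hr
    obtain ⟨P₂, hP₂⟩ := hdvd1
    have hmonicX : (X - C (c j)).Monic := monic_X_sub_C (c j)
    have hP₂monic : P₂.Monic := hmonicX.of_mul_monic_left (hP₂ ▸ hmonic)
    have hP₂deg : P₂.natDegree = n := by
      have := hmonicX.natDegree_mul hP₂monic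
      rw [← hP₂, hdeg, natDegree_X_sub_C] at this
      omega
    have hP₂dvd : P₂ ∣ ∏ t ∈ s.erase j, (X - C (c t)) := by
      have hprod : (X - C (c j)) * ∏ t ∈ s.erase j, (X - C (c t)) = ∏ t ∈ s, (X - C (c t)) :=
        Finset.mul_prod_erase s (fun t => X - C (c t)) hjs
      have h2 : (X - C (c j)) * P₂ ∣ (X - C (c j)) * ∏ t ∈ s.erase j, (X - C (c t)) := by
        rw [hprod, ← hP₂]; exact hdvd
      exact (mul_dvd_mul_iff_left (X_sub_C_ne_zero (c j))).1 h2
    obtain ⟨T₂, hT₂sub, hT₂⟩ := ih P₂ (s.erase j) hP₂deg hP₂monic hP₂dvd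
    refine ⟨insert j T₂, ?_, ?_⟩
    · intro t ht
      rcases Finset.mem_insert.1 ht with h | h
      · exact h ▸ hjs
      · exact Finset.mem_of_mem_erase (hT₂sub h)
    · have hjT₂ : j ∉ T₂ := fun h => (Finset.notMem_erase j s) (hT₂sub h)
      rw [Finset.prod_insert hjT₂, ← hT₂, ← hP₂]

/-- The explicit monic polynomial with coefficients indexed from the top. -/
noncomputable def sumPoly (q : ℕ) (v : Fin q → ℂ) : ℂ[X] :=
  X ^ q + ∑ m : Fin q, C (v m) * X ^ (q - 1 - (m : ℕ))

lemma sumPoly_eval (q : ℕ) (v : Fin q → ℂ) (x : ℂ) :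
    (sumPoly q v).eval x = x ^ q + ∑ m : Fin q, v m * x ^ (q - 1 - (m : ℕ)) := by
  simp [sumPoly, eval_finset_sum]

lemma sumPoly_tail_degree (q : ℕ) (hq : 0 < q) (v : Fin q → ℂ) :
    (∑ m : Fin q, C (v m) * X ^ (q - 1 - (m : ℕ))).degree < ((q : ℕ) : WithBot ℕ) := by
  apply lt_of_le_of_lt (degree_sum_le _ _)
  rw [Finset.sup_lt_iff (by exact_mod_cast WithBot.bot_lt_coe (q:ℕ))]
  intro m _
  apply lt_of_le_of_lt (degree_C_mul_X_pow_le _ _)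
  exact_mod_cast Nat.lt_of_le_of_lt (Nat.sub_le _ _) (Nat.sub_lt hq one_pos)

lemma sumPoly_monic (q : ℕ) (hq : 0 < q) (v : Fin q → ℂ) : (sumPoly q v).Monic :=
  monic_X_pow_add (sumPoly_tail_degree q hq v)

lemma sumPoly_natDegree (q : ℕ) (hq : 0 < q) (v : Fin q → ℂ) :
    (sumPoly q v).natDegree = q := by
  have : (sumPoly q v).degree = (q : ℕ) := by
    rw [sumPoly, degree_add_eq_left_of_degree_lt, degree_X_pow]
    rw [degree_X_pow]; exact sumPoly_tail_degree q hq v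
  rw [natDegree, this]; rfl

lemma sumPoly_coeff (q : ℕ) (v : Fin q → ℂ) (j : Fin q) :
    (sumPoly q v).coeff (q - 1 - (j : ℕ)) = v j := by
  have hjq : (j : ℕ) < q := j.isLt
  rw [sumPoly, coeff_add, coeff_X_pow, finset_sum_coeff]
  have h1 : (q - 1 - (j:ℕ) = q) = False := by
    simp only [eq_iff_iff, iff_false]; omega
  rw [Finset.sum_eq_single j]
  · simp [coeff_C_mul, coeff_X_pow, h1]
  · intro m _ hmj
    have : ¬(q - 1 - (j:ℕ) = q - 1 - (m:ℕ)) := by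
      intro h
      apply hmj
      have hm : (m:ℕ) < q := m.isLt
      apply Fin.ext
      omega
    simp [coeff_C_mul, coeff_X_pow, this]
  · intro h
    exact absurd (Finset.mem_univ j) h
open Complex Finset Set Filter Topology Polynomial Matrix

section VecMulTools
variable {q : ℕ}

lemma vecMul_smulM (v : Fin q → ℂ) (a : ℂ) (M : Matrix (Fin q) (Fin q) ℂ) :
    v ᵥ* (a • M) = a • (v ᵥ* M) := by
  funext j
  simp [Matrix.vecMul, dotProduct, Finset.mul_sum]
  apply Finset.sum_congr rfl
  intro i _; ring

lemma vecMul_sumM {ι : Type*} (s : Finset ι) (v : Fin q → ℂ) (M : ι → Matrix (Fin q) (Fin q) ℂ) :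
    v ᵥ* (∑ i ∈ s, M i) = ∑ i ∈ s, v ᵥ* (M i) := by
  funext j
  simp [Matrix.vecMul, dotProduct, Matrix.sum_apply, Finset.mul_sum]
  rw [Finset.sum_comm]

lemma vecMul_powM (v : Fin q → ℂ) (M : Matrix (Fin q) (Fin q) ℂ) (c : ℂ)
    (h : v ᵥ* M = c • v) (m : ℕ) : v ᵥ* (M ^ m) = c ^ m • v := by
  induction m with
  | zero => simp [Matrix.vecMul_one]
  | succ m ih =>
    rw [pow_succ, ← Matrix.vecMul_vecMul, ih, Matrix.smul_vecMul, h, smul_smul, ← pow_succ]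

/-- If the rows of a Vandermonde matrix with distinct nodes are left eigenvectors of `A`,
then `det A` is the product of the eigenvalues. -/
lemma det_of_vecMul_eig (c : Fin q → ℂ) (hc : Function.Injective c)
    (A : Matrix (Fin q) (Fin q) ℂ) (μ : Fin q → ℂ)
    (h : ∀ r, (fun i : Fin q => c r ^ (i : ℕ)) ᵥ* A = μ r • fun i : Fin q => c r ^ (i : ℕ)) :
    A.det = ∏ r : Fin q, μ r := by
  have hV : (Matrix.vandermonde c) * A = Matrix.diagonal μ * (Matrix.vandermonde c) := by
    ext r j
    have h1 := congrFun (h r) j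
    simp only [Matrix.vecMul, dotProduct, Pi.smul_apply, smul_eq_mul] at h1
    simp only [Matrix.mul_apply, Matrix.vandermonde, Matrix.diagonal_apply, Matrix.of_apply,
      ite_mul, zero_mul]
    rw [Finset.sum_ite_eq Finset.univ r fun x => μ r * c x ^ (j:ℕ)]
    simp [h1]
  have hdet := congrArg Matrix.det hV
  rw [Matrix.det_mul, Matrix.det_mul, Matrix.det_diagonal] at hdet
  have hvne : (Matrix.vandermonde c).det ≠ 0 := Matrix.det_vandermonde_ne_zero_iff.2 hc
  exact mul_right_cancel₀ hvne (by linear_combination hdet)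

end VecMulTools

section Companion
variable {q : ℕ}

/-- Companion-type matrix of the monic polynomial `X^q + ∑ p i X^i`. -/
noncomputable def compM (q : ℕ) (p : Fin q → ℂ) : Matrix (Fin q) (Fin q) ℂ :=
  fun i j => (if (i : ℕ) = (j : ℕ) + 1 then 1 else 0) + (if (j : ℕ) = q - 1 then -(p i) else 0)

lemma vecMul_compM (hq : 0 < q) (p : Fin q → ℂ) (c : ℂ)
    (hroot : c ^ q + ∑ i : Fin q, p i * c ^ (i : ℕ) = 0) :
    (fun i : Fin q => c ^ (i : ℕ)) ᵥ* (compM q p) = c • fun i : Fin q => c ^ (i : ℕ) := by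
  funext j
  simp only [Matrix.vecMul, dotProduct, compM, Pi.smul_apply, smul_eq_mul]
  have hsplit : ∑ x : Fin q, c ^ (x:ℕ) * ((if (x : ℕ) = (j : ℕ) + 1 then (1:ℂ) else 0)
      + (if (j : ℕ) = q - 1 then -(p x) else 0))
      = (∑ x : Fin q, if (x : ℕ) = (j : ℕ) + 1 then c ^ (x:ℕ) else 0)
      + (∑ x : Fin q, if (j : ℕ) = q - 1 then -(p x * c ^ (x:ℕ)) else 0) := by
    rw [← Finset.sum_add_distrib]
    apply Finset.sum_congr rfl
    intro i _
    split_ifs <;> ring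
  rw [hsplit]
  by_cases hj : (j : ℕ) = q - 1
  · have h1 : ∀ i : Fin q, ¬((i : ℕ) = (j : ℕ) + 1) := by
      intro i hi
      have := i.isLt
      omega
    rw [Finset.sum_congr rfl (fun i _ => if_neg (h1 i)), Finset.sum_const_zero]
    simp only [hj, if_true, zero_add]
    calc ∑ x : Fin q, -(p x * c ^ (x:ℕ))
        = -(∑ x : Fin q, p x * c ^ (x:ℕ)) := by simp
      _ = c ^ q := by linear_combination -hroot
      _ = c ^ (q - 1 + 1) := by congr 1; omega
      _ = c * c ^ (q - 1) := by rw [pow_succ]; ring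
  · have hjlt : (j : ℕ) + 1 < q := by have := j.isLt; omega
    rw [Finset.sum_congr rfl (fun i _ => if_neg hj), Finset.sum_const_zero, add_zero]
    rw [Finset.sum_eq_single (⟨(j:ℕ)+1, hjlt⟩ : Fin q)]
    · simp [pow_succ, mul_comm]
    · intro i _ hi
      rw [if_neg]
      intro hic
      exact hi (Fin.ext hic)
    · intro h; exact absurd (Finset.mem_univ _) h

end Companion
----------------------------------------------------------------
-- Meromorphic entries machinery
----------------------------------------------------------------

/-- All entries of a matrix-valued function are meromorphic on `ℂ`. -/
def MeroEnt {q : ℕ} (M : ℂ → Matrix (Fin q) (Fin q) ℂ) : Prop :=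
  ∀ i j x, MeromorphicAt (fun z => M z i j) x

lemma MeroEnt.add {q : ℕ} {M N : ℂ → Matrix (Fin q) (Fin q) ℂ}
    (hM : MeroEnt M) (hN : MeroEnt N) : MeroEnt (fun z => M z + N z) := by
  intro i j x
  have := (hM i j x).add (hN i j x)
  simpa [Matrix.add_apply, Pi.add_def] using this

lemma MeroEnt.smulf {q : ℕ} {f : ℂ → ℂ} {M : ℂ → Matrix (Fin q) (Fin q) ℂ}
    (hf : ∀ x, MeromorphicAt f x) (hM : MeroEnt M) : MeroEnt (fun z => f z • M z) := by
  intro i j x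
  have := (hf x).mul (hM i j x)
  simpa [Matrix.smul_apply, smul_eq_mul, Pi.mul_def] using this

lemma MeroEnt.mul {q : ℕ} {M N : ℂ → Matrix (Fin q) (Fin q) ℂ}
    (hM : MeroEnt M) (hN : MeroEnt N) : MeroEnt (fun z => M z * N z) := by
  intro i j x
  have : MeromorphicAt (fun z => ∑ l : Fin q, M z i l * N z l j) x :=
    meroAt_sum Finset.univ _ (fun l _ => (hM i l x).mul (hN l j x))
  simpa [Matrix.mul_apply] using this

lemma MeroEnt.pow {q : ℕ} {M : ℂ → Matrix (Fin q) (Fin q) ℂ} (hM : MeroEnt M) (n : ℕ) :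
    MeroEnt (fun z => (M z) ^ n) := by
  induction n with
  | zero =>
    intro i j x
    simp only [pow_zero]
    exact MeromorphicAt.const _ x
  | succ n ih =>
    intro i j x
    have := (MeroEnt.mul ih hM) i j x
    simpa [pow_succ] using this

lemma MeroEnt.sum {q : ℕ} {ι : Type*} (s : Finset ι) {M : ι → ℂ → Matrix (Fin q) (Fin q) ℂ}
    (hM : ∀ l ∈ s, MeroEnt (M l)) : MeroEnt (fun z => ∑ l ∈ s, M l z) := by
  intro i j x
  have : MeromorphicAt (fun z => ∑ l ∈ s, M l z i j) x :=
    meroAt_sum s _ (fun l hl => hM l hl i j x)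
  simpa [Matrix.sum_apply] using this

lemma MeroEnt.det {q : ℕ} {M : ℂ → Matrix (Fin q) (Fin q) ℂ} (hM : MeroEnt M) (x : ℂ) :
    MeromorphicAt (fun z => (M z).det) x := by
  classical
  have hrw : (fun z => (M z).det)
      = fun z => ∑ σ : Equiv.Perm (Fin q), ((Equiv.Perm.sign σ : ℤ) : ℂ) * ∏ i : Fin q, M z (σ i) i := by
    funext z
    rw [Matrix.det_apply]
    apply Finset.sum_congr rfl
    intro σ _
    rw [Units.smul_def, zsmul_eq_mul]
  rw [hrw]
  exact meroAt_sum Finset.univ _ (fun σ _ =>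
    (MeromorphicAt.const _ x).mul (meroAt_prod Finset.univ _ (fun i _ => hM (σ i) i x)))

----------------------------------------------------------------
-- The transfer lemma
----------------------------------------------------------------

lemma main_transfer (k q : ℕ) (hq : 0 < q) (T : Finset (Fin k)) (hT : T.card = q)
    (p : Fin q → ℂ → ℂ) (hpmero : ∀ i x, MeromorphicAt (p i) x)
    (F w : Fin k → ℂ → ℂ) (Ω : Set ℂ) (hΩ : IsOpen Ω)
    (hpan : ∀ i, AnalyticOnNhd ℂ (p i) Ω)
    (hFd : ∀ j, ∀ z ∈ Ω, HasDerivAt (F j) (w j z) z)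
    (hdist : ∀ z ∈ Ω, ∀ i ∈ T, ∀ j ∈ T, i ≠ j → F i z ≠ F j z)
    (hid : ∀ z ∈ Ω, ∀ x : ℂ, x ^ q + ∑ i : Fin q, p i z * x ^ (i : ℕ) = ∏ t ∈ T, (x - F t z)) :
    ∃ α : Fin q → ℂ → ℂ, (∀ m x, MeromorphicAt (α m) x) ∧
      ∀ z ∈ Ω, ∀ x : ℂ, x ^ q + ∑ i : Fin q, α i z * x ^ (i : ℕ) = ∏ t ∈ T, (x - w t z) := by
  classical
  set pd : Fin q → ℂ → ℂ := fun i => deriv (p i) with hpddef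
  set Cp : ℂ → Matrix (Fin q) (Fin q) ℂ := fun z => compM q (fun i => p i z) with hCpdef
  have hCpent : MeroEnt Cp := by
    intro i j x
    have : MeromorphicAt (fun z => (if (i : ℕ) = (j : ℕ) + 1 then (1:ℂ) else 0)
        + (if (j : ℕ) = q - 1 then -(p i z) else 0)) x := by
      apply MeromorphicAt.add
      · exact MeromorphicAt.const _ x
      · split_ifs
        · exact (hpmero i x).neg
        · exact MeromorphicAt.const _ x
    simpa [hCpdef, compM] using this
  set CmF : ℂ → Matrix (Fin q) (Fin q) ℂ := fun z =>
    (q : ℂ) • (Cp z) ^ (q - 1)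
      + ∑ i : Fin q, ((((i : ℕ) : ℂ)) * p i z) • (Cp z) ^ ((i : ℕ) - 1) with hCmFdef
  set PzF : ℂ → Matrix (Fin q) (Fin q) ℂ := fun z =>
    ∑ i : Fin q, (pd i z) • (Cp z) ^ ((i : ℕ)) with hPzFdef
  have hCmFent : MeroEnt CmF :=
    MeroEnt.add (MeroEnt.smulf (fun x => MeromorphicAt.const _ x) (hCpent.pow (q-1)))
      (MeroEnt.sum Finset.univ (fun l _ =>
        MeroEnt.smulf (fun x => (MeromorphicAt.const _ x).mul (hpmero l x)) (hCpent.pow _)))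
  have hPzFent : MeroEnt PzF :=
    MeroEnt.sum Finset.univ (fun l _ =>
      MeroEnt.smulf (fun x => meroAt_deriv (hpmero l x)) (hCpent.pow _))
  set χ : Fin (q+1) → ℂ → ℂ := fun nd z =>
    ((((nd : ℕ) : ℂ)) • CmF z + PzF z).det * ((CmF z).det)⁻¹ with hχdef
  have hχmero : ∀ nd x, MeromorphicAt (χ nd) x := by
    intro nd x
    exact ((MeroEnt.add (MeroEnt.smulf (fun x => MeromorphicAt.const _ x) hCmFent)
      hPzFent).det x).mul ((hCmFent.det x).inv)
  set α : Fin q → ℂ → ℂ := fun m z =>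
    ∑ nd : Fin (q+1), (Wmat q)⁻¹ (Fin.castSucc m) nd * χ nd z with hαdef
  refine ⟨α, ?_, ?_⟩
  · intro m x
    exact meroAt_sum Finset.univ _ (fun nd _ => (MeromorphicAt.const _ x).mul (hχmero nd x))
  -- pointwise correctness
  intro z hz
  set e : {x // x ∈ T} ≃ Fin q := T.equivFinOfCardEq hT with hedef
  set τ : Fin q → Fin k := fun r => (e.symm r : Fin k) with hτdef
  have hτT : ∀ r, τ r ∈ T := fun r => (e.symm r).2
  have hτinj : Function.Injective τ := by
    intro r r' h
    have : e.symm r = e.symm r' := Subtype.ext h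
    exact e.symm.injective this
  set c : Fin q → ℂ := fun r => F (τ r) z with hcdef
  have hcinj : Function.Injective c := by
    intro r r' h
    by_contra hne
    exact hdist z hz (τ r) (hτT r) (τ r') (hτT r') (fun hh => hne (hτinj hh)) h
  have hroot : ∀ r, c r ^ q + ∑ i : Fin q, p i z * c r ^ (i : ℕ) = 0 := by
    intro r
    rw [hid z hz (c r)]
    exact Finset.prod_eq_zero (hτT r) (sub_self _)
  have hcomp : ∀ r, (fun i : Fin q => c r ^ (i : ℕ)) ᵥ* (Cp z) = c r • fun i : Fin q => c r ^ (i : ℕ) :=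
    fun r => vecMul_compM hq _ (c r) (hroot r)
  set PMv : Fin q → ℂ := fun r =>
    (q : ℂ) * c r ^ (q - 1) + ∑ i : Fin q, (((i : ℕ) : ℂ)) * p i z * c r ^ ((i : ℕ) - 1) with hPMvdef
  set Pzv : Fin q → ℂ := fun r => ∑ i : Fin q, pd i z * c r ^ (i : ℕ) with hPzvdef
  have hCm_eig : ∀ r, (fun i : Fin q => c r ^ (i : ℕ)) ᵥ* (CmF z)
      = PMv r • fun i : Fin q => c r ^ (i : ℕ) := by
    intro r
    show (fun i : Fin q => c r ^ (i : ℕ)) ᵥ* ((q : ℂ) • (Cp z) ^ (q - 1)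
      + ∑ i : Fin q, ((((i : ℕ) : ℂ)) * p i z) • (Cp z) ^ ((i : ℕ) - 1)) = _
    rw [Matrix.vecMul_add, vecMul_smulM, vecMul_sumM]
    rw [vecMul_powM _ _ _ (hcomp r) (q-1)]
    rw [Finset.sum_congr rfl (fun i (_ : i ∈ Finset.univ) => by
      rw [vecMul_smulM, vecMul_powM _ _ _ (hcomp r) ((i:ℕ)-1), smul_smul])]
    rw [← Finset.sum_smul, smul_smul, ← add_smul]
  have hPz_eig : ∀ r, (fun i : Fin q => c r ^ (i : ℕ)) ᵥ* (PzF z)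
      = Pzv r • fun i : Fin q => c r ^ (i : ℕ) := by
    intro r
    show (fun i : Fin q => c r ^ (i : ℕ)) ᵥ* (∑ i : Fin q, (pd i z) • (Cp z) ^ ((i : ℕ))) = _
    rw [vecMul_sumM]
    rw [Finset.sum_congr rfl (fun i (_ : i ∈ Finset.univ) => by
      rw [vecMul_smulM, vecMul_powM _ _ _ (hcomp r) ((i:ℕ)), smul_smul])]
    rw [← Finset.sum_smul]
  -- implicit differentiation
  have hw : ∀ r, PMv r * w (τ r) z + Pzv r = 0 := by
    intro r
    set j : Fin k := τ r with hjdef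
    have hψ : ∀ y ∈ Ω, (F j y) ^ q + ∑ i : Fin q, p i y * (F j y) ^ (i : ℕ) = 0 := by
      intro y hy
      rw [hid y hy (F j y)]
      exact Finset.prod_eq_zero (hτT r) (sub_self _)
    have hd1 : HasDerivAt (fun y => (F j y) ^ q + ∑ i : Fin q, p i y * (F j y) ^ (i : ℕ))
        ((q : ℂ) * (F j z) ^ (q - 1) * (w j z)
          + ∑ i : Fin q, (pd i z * (F j z) ^ (i : ℕ)
            + p i z * ((((i : ℕ) : ℂ)) * (F j z) ^ ((i : ℕ) - 1) * w j z))) z := by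
      apply HasDerivAt.add
      · exact (hFd j z hz).pow q
      · apply HasDerivAt.fun_sum
        intro i _
        have hpder : HasDerivAt (p i) (pd i z) z :=
          ((hpan i z hz).differentiableAt).hasDerivAt
        exact hpder.mul ((hFd j z hz).pow (i : ℕ))
    have hd0 : HasDerivAt (fun y => (F j y) ^ q + ∑ i : Fin q, p i y * (F j y) ^ (i : ℕ))
        (0 : ℂ) z := by
      apply (hasDerivAt_const z (0:ℂ)).congr_of_eventuallyEq
      filter_upwards [hΩ.mem_nhds hz] with y hy
      exact hψ y hy
    have heq := hd1.unique hd0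
    have hsplit : ∑ i : Fin q, (pd i z * (F j z) ^ (i : ℕ)
        + p i z * ((((i : ℕ) : ℂ)) * (F j z) ^ ((i : ℕ) - 1) * w j z))
        = (∑ i : Fin q, pd i z * (F j z) ^ (i : ℕ))
          + (∑ i : Fin q, (((i : ℕ) : ℂ)) * p i z * (F j z) ^ ((i : ℕ) - 1)) * w j z := by
      rw [Finset.sum_add_distrib, Finset.sum_mul]
      congr 1
      apply Finset.sum_congr rfl
      intro i _
      ring
    rw [hsplit] at heq
    have hc : c r = F j z := rfl
    rw [hPMvdef, hPzvdef]
    simp only [hc]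
    linear_combination heq
  -- determinant identities
  have hdetCm : (CmF z).det = ∏ r : Fin q, PMv r :=
    det_of_vecMul_eig c hcinj (CmF z) PMv hCm_eig
  -- PMv r ≠ 0
  have hPMne : ∀ r, PMv r ≠ 0 := by
    intro r
    -- identify PMv r with the evaluated derivative of the product polynomial
    have hQ : (X ^ q + ∑ i : Fin q, C (p i z) * X ^ (i : ℕ) : ℂ[X])
        = ∏ t ∈ T, (X - C (F t z)) := by
      apply Polynomial.funext
      intro x
      rw [eval_prod]
      simpa [eval_finset_sum] using hid z hz x
    have hsplitQ : (X ^ q + ∑ i : Fin q, C (p i z) * X ^ (i : ℕ) : ℂ[X])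
        = (X - C (c r)) * ∏ t ∈ T.erase (τ r), (X - C (F t z)) := by
      rw [hQ, hcdef]
      exact (Finset.mul_prod_erase T (fun t => X - C (F t z)) (hτT r)).symm
    have hder := congrArg (fun P : ℂ[X] => (Polynomial.derivative P).eval (c r)) hsplitQ
    simp only [derivative_add, derivative_X_pow, derivative_mul, derivative_sub,
      derivative_X, derivative_C, eval_add, eval_mul, eval_sub, eval_X, eval_C,
      sub_self, zero_mul, mul_zero, zero_add, eval_finset_sum, one_mul, zero_sub,
      derivative_sum, derivative_C_mul_X_pow, eval_pow, eval_natCast, eval_one,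
      eval_zero, sub_zero, add_zero] at hder
    have hRHS : PMv r = (∏ t ∈ T.erase (τ r), (X - C (F t z))).eval (c r) := by
      show ((q : ℂ) * c r ^ (q - 1)
        + ∑ i : Fin q, (((i : ℕ) : ℂ)) * p i z * c r ^ ((i : ℕ) - 1)) = _
      rw [show (∑ i : Fin q, (((i : ℕ) : ℂ)) * p i z * c r ^ ((i : ℕ) - 1))
          = ∑ i : Fin q, p i z * ((((i : ℕ) : ℂ)) * c r ^ ((i : ℕ) - 1)) from
        Finset.sum_congr rfl (fun i _ => by ring)]
      linear_combination hder
    rw [hRHS]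
    rw [eval_prod]
    apply Finset.prod_ne_zero_iff.2
    intro t ht
    rw [eval_sub, eval_X, eval_C, sub_ne_zero]
    have htT : t ∈ T := Finset.mem_of_mem_erase ht
    have htne : t ≠ τ r := Finset.ne_of_mem_erase ht
    exact fun hh => (hdist z hz (τ r) (hτT r) t htT (fun h2 => htne h2.symm) hh)
  have hdetCmne : (CmF z).det ≠ 0 := by
    rw [hdetCm]; exact Finset.prod_ne_zero_iff.2 (fun r _ => hPMne r)
  -- χ values
  have hχval : ∀ nd : Fin (q+1), χ nd z = ∏ t ∈ T, ((((nd : ℕ) : ℂ)) - w t z) := by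
    intro nd
    set x : ℂ := (((nd : ℕ) : ℂ)) with hxdef
    have heig : ∀ r, (fun i : Fin q => c r ^ (i : ℕ)) ᵥ* (x • CmF z + PzF z)
        = (x * PMv r + Pzv r) • fun i : Fin q => c r ^ (i : ℕ) := by
      intro r
      rw [Matrix.vecMul_add, vecMul_smulM, hCm_eig r, hPz_eig r, smul_smul, ← add_smul]
    have hdet2 : (x • CmF z + PzF z).det = ∏ r : Fin q, (x * PMv r + Pzv r) :=
      det_of_vecMul_eig c hcinj _ _ heig
    have hfactor : ∀ r, x * PMv r + Pzv r = PMv r * (x - w (τ r) z) := by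
      intro r
      linear_combination hw r
    have : (x • CmF z + PzF z).det = (∏ r : Fin q, PMv r) * ∏ r : Fin q, (x - w (τ r) z) := by
      rw [hdet2, ← Finset.prod_mul_distrib]
      exact Finset.prod_congr rfl (fun r _ => hfactor r)
    show (x • CmF z + PzF z).det * ((CmF z).det)⁻¹ = _
    rw [this, hdetCm]
    rw [mul_comm ((∏ r : Fin q, PMv r)) _, mul_assoc,
      mul_inv_cancel₀ (Finset.prod_ne_zero_iff.2 (fun r _ => hPMne r)), mul_one]
    -- reindex the product
    rw [← Finset.prod_coe_sort T (fun t => x - w t z)]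
    exact Equiv.prod_comp e.symm (fun s : {t // t ∈ T} => x - w (s : Fin k) z)
  -- final evaluation identity
  intro x
  set Rz : ℂ[X] := ∏ t ∈ T, (X - C (w t z)) with hRzdef
  have hRmonic : Rz.Monic := monic_prod_of_monic _ _ (fun t _ => monic_X_sub_C _)
  have hRdeg : Rz.natDegree = q := by
    rw [hRzdef, Polynomial.natDegree_prod _ _ (fun t _ => X_sub_C_ne_zero _)]
    simp [natDegree_X_sub_C, hT]
  have hαval : ∀ m : Fin q, α m z = Rz.coeff (m : ℕ) := by
    intro m
    have h1 := coeff_eq_interp q Rz (le_of_eq hRdeg) (Fin.castSucc m)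
    have h2 : ∀ nd : Fin (q+1), Rz.eval (((nd:ℕ):ℂ)) = χ nd z := by
      intro nd
      rw [hRzdef, eval_prod, hχval nd]
      apply Finset.prod_congr rfl
      intro t _
      simp
    show (∑ nd : Fin (q+1), (Wmat q)⁻¹ (Fin.castSucc m) nd * χ nd z) = _
    rw [Finset.sum_congr rfl (fun nd (_ : nd ∈ Finset.univ) => by rw [← h2 nd])]
    rw [← h1]
    norm_num
  have hev : Rz.eval x = x ^ q + ∑ i : Fin q, α i z * x ^ (i:ℕ) := by
    rw [Polynomial.eval_eq_sum_range' (by rw [hRdeg]; exact Nat.lt_succ_self q) x]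
    rw [Finset.sum_range_succ]
    have hcq : Rz.coeff q = 1 := by
      have := hRmonic.coeff_natDegree
      rwa [hRdeg] at this
    rw [hcq, one_mul, add_comm]
    congr 1
    rw [← Fin.sum_univ_eq_sum_range (fun i => Rz.coeff i * x ^ i) q]
    exact Finset.sum_congr rfl (fun i _ => by rw [hαval i])
  rw [← hev, hRzdef, eval_prod]
  exact Finset.prod_congr rfl (fun t _ => by simp)


-- ============ new helpers ============

/-- The order-reversing equivalence of `Fin q`. -/
def reflFin (q : ℕ) : Fin q ≃ Fin q where
  toFun m := ⟨q - 1 - (m : ℕ), by have := m.isLt; omega⟩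
  invFun m := ⟨q - 1 - (m : ℕ), by have := m.isLt; omega⟩
  left_inv m := by apply Fin.ext; have := m.isLt; simp; omega
  right_inv m := by apply Fin.ext; have := m.isLt; simp; omega

lemma reflFin_coe (q : ℕ) (m : Fin q) : ((reflFin q m : Fin q) : ℕ) = q - 1 - (m:ℕ) := rfl

lemma codiscrete_mem_punctured {s : Set ℂ} (hs : s ∈ Filter.codiscrete ℂ) (x : ℂ) :
    s ∈ 𝓝[≠] x := by
  rw [mem_codiscrete] at hs
  have := hs x
  rwa [Filter.disjoint_principal_right, compl_compl] at this

lemma reflFin_invol (q : ℕ) (j : Fin q) : reflFin q (reflFin q j) = j := (reflFin q).left_inv j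

lemma sum_reflFin (q : ℕ) (g : Fin q → ℂ) (x : ℂ) :
    ∑ j : Fin q, g (reflFin q j) * x ^ (q - 1 - (j:ℕ)) = ∑ i : Fin q, g i * x ^ (i:ℕ) := by
  rw [← Equiv.sum_comp (reflFin q) (fun i : Fin q => g i * x ^ (i:ℕ))]
  apply Finset.sum_congr rfl
  intro j _
  rfl

lemma poly_eq_of_coeffs (k q : ℕ) (hq0 : 0 < q) (T : Finset (Fin k)) (hTcard : T.card = q)
    (v : Fin q → ℂ) (c : Fin k → ℂ)
    (hc : ∀ m : Fin q, v m = (∏ t ∈ T, (X - C (c t))).coeff (q - 1 - (m:ℕ))) :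
    sumPoly q v = ∏ t ∈ T, (X - C (c t)) := by
  have hdeg : (∏ t ∈ T, (X - C (c t))).natDegree = q := by
    rw [Polynomial.natDegree_prod _ _ (fun t _ => X_sub_C_ne_zero _)]
    simpa using hTcard
  have hmon : (∏ t ∈ T, (X - C (c t))).Monic :=
    monic_prod_of_monic _ _ (fun t _ => monic_X_sub_C _)
  apply Polynomial.ext
  intro n
  rcases lt_trichotomy n q with hn | hn | hn
  · set m : Fin q := ⟨q - 1 - n, by omega⟩ with hm
    have h1 : q - 1 - (m:ℕ) = n := by
      show q - 1 - (q - 1 - n) = n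
      omega
    rw [← h1, sumPoly_coeff q v m, hc m]
  · rw [hn]
    have h1 := (sumPoly_monic q hq0 v).coeff_natDegree
    rw [sumPoly_natDegree q hq0 v] at h1
    have h2 := hmon.coeff_natDegree
    rw [hdeg] at h2
    rw [h1, h2]
  · rw [coeff_eq_zero_of_natDegree_lt (by rw [sumPoly_natDegree q hq0 v]; exact hn),
      coeff_eq_zero_of_natDegree_lt (by rw [hdeg]; exact hn)]

/-- Step A: pointwise extraction of the root set of the first factor. -/
lemma extract_T (k q : ℕ) (hq0 : 0 < q) (hqk : q < k) (a : Fin q → ℂ → ℂ)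
    (b : Fin (k-q) → ℂ → ℂ) (F : Fin k → ℂ → ℂ) (B : Fin k → ℂ → ℂ) (z : ℂ)
    (hBz : ∀ M : ℂ, M ^ k + ∑ j : Fin k, B j z * M ^ (k - 1 - (j : ℕ)) = ∏ j : Fin k, (M - F j z))
    (hEz : ∀ x : ℂ, x ^ k + ∑ j : Fin k, B j z * x ^ (k - 1 - (j : ℕ)) =
      (x ^ q + ∑ j : Fin q, a j z * x ^ (q - 1 - (j : ℕ))) *
      (x ^ (k-q) + ∑ j : Fin (k-q), b j z * x ^ (k - q - 1 - (j : ℕ)))) :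
    ∃ T : Finset (Fin k), T.card = q ∧
      sumPoly q (fun m => a m z) = ∏ t ∈ T, (X - C (F t z)) ∧
      sumPoly (k-q) (fun m => b m z) = ∏ t ∈ Finset.univ \ T, (X - C (F t z)) := by
  classical
  have hq'0 : 0 < k - q := by omega
  set Pa : ℂ[X] := sumPoly q (fun m => a m z) with hPa
  set Pb : ℂ[X] := sumPoly (k-q) (fun m => b m z) with hPb
  have hPP : Pa * Pb = ∏ j ∈ Finset.univ, (X - C (F j z)) := by
    apply Polynomial.funext
    intro x
    rw [eval_mul, eval_prod, hPa, hPb, sumPoly_eval, sumPoly_eval]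
    rw [← hEz x, hBz x]
    apply Finset.prod_congr rfl
    intro t _
    simp
  obtain ⟨T, hTsub, hTeq⟩ := monic_dvd_prod_linear (fun j => F j z) q Pa Finset.univ
    (sumPoly_natDegree q hq0 _) (sumPoly_monic q hq0 _) ⟨Pb, hPP.symm⟩
  have hTcard : T.card = q := by
    have h1 : Pa.natDegree = q := sumPoly_natDegree q hq0 _
    rw [hTeq] at h1
    rw [Polynomial.natDegree_prod _ _ (fun t _ => X_sub_C_ne_zero _)] at h1
    simpa using h1
  refine ⟨T, hTcard, hTeq, ?_⟩
  have hsd : (∏ t ∈ Finset.univ \ T, (X - C (F t z))) * ∏ t ∈ T, (X - C (F t z))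
      = ∏ j ∈ Finset.univ, (X - C (F j z)) :=
    Finset.prod_sdiff hTsub
  have h2 : Pa * Pb = Pa * ∏ t ∈ Finset.univ \ T, (X - C (F t z)) := by
    rw [hPP, ← hsd, hTeq]
    ring
  exact mul_left_cancel₀ ((sumPoly_monic q hq0 _).ne_zero) h2


end Helpers

/-- The monic polynomial `M^k + B₁(z)M^{k-1} + ⋯ + B_k(z)` with meromorphic
coefficients factors (over the field of meromorphic functions on `ℂ`) if it is a
product of two monic polynomials of positive degree with meromorphic coefficients,
the identity holding away from a discrete exceptional set. -/
def AlgFactorable (k : ℕ) (A : Fin k → ℂ → ℂ) : Prop :=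
  ∃ q : ℕ, 0 < q ∧ q < k ∧
    ∃ (a : Fin q → ℂ → ℂ) (b : Fin (k - q) → ℂ → ℂ),
      (∀ j, MeromorphicOn (a j) Set.univ) ∧ (∀ j, MeromorphicOn (b j) Set.univ) ∧
      ∀ᶠ z in Filter.codiscrete ℂ, ∀ w : ℂ,
        w ^ k + ∑ j : Fin k, A j z * w ^ (k - 1 - (j : ℕ)) =
          (w ^ q + ∑ j : Fin q, a j z * w ^ (q - 1 - (j : ℕ))) *
          (w ^ (k - q) + ∑ j : Fin (k - q), b j z * w ^ (k - q - 1 - (j : ℕ)))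

open Filter Topology Polynomial Matrix in
/-- The integral of an irreducible algebroidal function is irreducible: if on a
domain `U` the roots of `M^k + B₁(z)M^{k-1} + ⋯ + B_k(z)` are holomorphic
functions `F₁, …, F_k` whose derivatives are the `k` distinct branches
`w₁, …, w_k` of the irreducible equation `W^k + A₁(z)W^{k-1} + ⋯ + A_k(z) = 0`,
then the `B`-polynomial cannot factor into monic meromorphic factors of positive
degree; i.e. it is irreducible. -/
theorem integral_of_irreducible_is_irreducible (k : ℕ) (hk : 1 ≤ k)
    (A : Fin k → ℂ → ℂ) (hA : ∀ j, MeromorphicOn (A j) Set.univ)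
    (hirr : ¬ AlgFactorable k A)
    (U : Set ℂ) (hU : IsOpen U) (hUconn : IsConnected U)
    (w F : Fin k → ℂ → ℂ)
    (hroots : ∀ z ∈ U, Function.Injective (fun j => w j z) ∧
      ∀ x : ℂ, x ^ k + ∑ j : Fin k, A j z * x ^ (k - 1 - (j : ℕ)) =
        ∏ j : Fin k, (x - w j z))
    (hF : ∀ j, ∀ z ∈ U, HasDerivAt (F j) (w j z) z)
    (B : Fin k → ℂ → ℂ) (hB : ∀ j, MeromorphicOn (B j) Set.univ)
    (hBroots : ∀ z ∈ U, ∀ M : ℂ,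
      M ^ k + ∑ j : Fin k, B j z * M ^ (k - 1 - (j : ℕ)) =
        ∏ j : Fin k, (M - F j z)) :
    ¬ AlgFactorable k B := by
  classical
  intro hBfact
  obtain ⟨q, hq0, hqk, a, b, hamero, hbmero, hE⟩ := hBfact
  have hq'0 : 0 < k - q := by omega
  obtain ⟨z₀, hz₀U⟩ := hUconn.nonempty
  -- F is analytic on U
  have hFan : ∀ j, AnalyticOnNhd ℂ (F j) U := by
    intro j
    apply DifferentiableOn.analyticOnNhd _ hU
    exact fun z hz => ((hF j z hz).differentiableAt).differentiableWithinAt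
  -- membership of both U and the factorization event near z₀
  have hE' : {z : ℂ | ∀ x : ℂ,
      x ^ k + ∑ j : Fin k, B j z * x ^ (k - 1 - (j : ℕ)) =
        (x ^ q + ∑ j : Fin q, a j z * x ^ (q - 1 - (j : ℕ))) *
        (x ^ (k-q) + ∑ j : Fin (k-q), b j z * x ^ (k - q - 1 - (j : ℕ)))} ∈ 𝓝[≠] z₀ :=
    codiscrete_mem_punctured hE z₀
  have hUmem : U ∈ 𝓝[≠] z₀ := nhdsWithin_le_nhds (hU.mem_nhds hz₀U)
  -- pigeonhole: some T occurs frequently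
  have hsome : ∃ T : Finset (Fin k), T.card = q ∧ ∃ᶠ z in 𝓝[≠] z₀,
      (sumPoly q (fun m => a m z) = ∏ t ∈ T, (X - C (F t z)) ∧
       sumPoly (k-q) (fun m => b m z) = ∏ t ∈ Finset.univ \ T, (X - C (F t z))) := by
    by_contra hnone
    push_neg at hnone
    have hev : ∀ᶠ z in 𝓝[≠] z₀, ∀ T : Finset (Fin k), T.card = q →
        ¬(sumPoly q (fun m => a m z) = ∏ t ∈ T, (X - C (F t z)) ∧
          sumPoly (k-q) (fun m => b m z) = ∏ t ∈ Finset.univ \ T, (X - C (F t z))) := by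
      rw [Filter.eventually_all]
      intro T
      by_cases hTc : T.card = q
      · have := hnone T hTc
        simp only [← not_and] at this
        exact this.mono (fun z hz _ => hz)
      · exact Filter.Eventually.of_forall (fun z hq => absurd hq hTc)
    have hUev : ∀ᶠ z in 𝓝[≠] z₀, z ∈ U := hUmem
    have hEev : ∀ᶠ z in 𝓝[≠] z₀, ∀ x : ℂ,
        x ^ k + ∑ j : Fin k, B j z * x ^ (k - 1 - (j : ℕ)) =
          (x ^ q + ∑ j : Fin q, a j z * x ^ (q - 1 - (j : ℕ))) *
          (x ^ (k-q) + ∑ j : Fin (k-q), b j z * x ^ (k - q - 1 - (j : ℕ))) := hE'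
    obtain ⟨z, hzU, hzE, hzN⟩ := (hUev.and (hEev.and hev)).exists
    obtain ⟨T, hTc, h1, h2⟩ := extract_T k q hq0 hqk a b F B z (hBroots z hzU) hzE
    exact hzN T hTc ⟨h1, h2⟩
  obtain ⟨T, hTcard, hTfreq⟩ := hsome
  have hT'card : (Finset.univ \ T).card = k - q := by
    rw [Finset.card_sdiff_of_subset (Finset.subset_univ T), hTcard]
    simp
  -- interpolation-based global coefficient functions
  set Ga : Fin q → ℂ → ℂ := fun m y =>
    ∑ nd : Fin (q+1), (Wmat q)⁻¹ (⟨q - 1 - (m:ℕ), by omega⟩ : Fin (q+1)) nd *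
      ∏ t ∈ T, ((((nd:ℕ):ℂ)) - F t y) with hGadef
  set Gb : Fin (k-q) → ℂ → ℂ := fun m y =>
    ∑ nd : Fin (k-q+1), (Wmat (k-q))⁻¹ (⟨k - q - 1 - (m:ℕ), by omega⟩ : Fin (k-q+1)) nd *
      ∏ t ∈ Finset.univ \ T, ((((nd:ℕ):ℂ)) - F t y) with hGbdef
  -- coefficients of the subproducts are given by the interpolation formulas
  have hGa_coeff : ∀ (y : ℂ) (m : Fin q),
      (∏ t ∈ T, (X - C (F t y))).coeff (q - 1 - (m:ℕ)) = Ga m y := by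
    intro y m
    have hdeg : (∏ t ∈ T, (X - C (F t y))).natDegree = q := by
      rw [Polynomial.natDegree_prod _ _ (fun t _ => X_sub_C_ne_zero _)]
      simpa using hTcard
    have h := coeff_eq_interp q _ (le_of_eq hdeg) (⟨q - 1 - (m:ℕ), by omega⟩ : Fin (q+1))
    rw [show ((⟨q - 1 - (m:ℕ), by omega⟩ : Fin (q+1)) : ℕ) = q - 1 - (m:ℕ) from rfl] at h
    rw [h, hGadef]
    apply Finset.sum_congr rfl
    intro nd _
    rw [eval_prod]
    congr 1
    exact Finset.prod_congr rfl (fun t _ => by simp)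
  have hGb_coeff : ∀ (y : ℂ) (m : Fin (k-q)),
      (∏ t ∈ Finset.univ \ T, (X - C (F t y))).coeff (k - q - 1 - (m:ℕ)) = Gb m y := by
    intro y m
    have hdeg : (∏ t ∈ Finset.univ \ T, (X - C (F t y))).natDegree = k - q := by
      rw [Polynomial.natDegree_prod _ _ (fun t _ => X_sub_C_ne_zero _)]
      simpa using hT'card
    have h := coeff_eq_interp (k-q) _ (le_of_eq hdeg)
      (⟨k - q - 1 - (m:ℕ), by omega⟩ : Fin (k-q+1))
    rw [show ((⟨k - q - 1 - (m:ℕ), by omega⟩ : Fin (k-q+1)) : ℕ) = k - q - 1 - (m:ℕ) from rfl] at h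
    rw [h, hGbdef]
    apply Finset.sum_congr rfl
    intro nd _
    rw [eval_prod]
    congr 1
    exact Finset.prod_congr rfl (fun t _ => by simp)
  -- Ga, Gb are meromorphic (indeed analytic) on U
  have hGamero : ∀ m, MeromorphicOn (Ga m) U := by
    intro m x hx
    apply meroAt_sum
    intro nd _
    apply MeromorphicAt.mul (MeromorphicAt.const _ x)
    apply meroAt_prod
    intro t _
    exact ((MeromorphicAt.const _ x).sub ((hFan t x hx).meromorphicAt))
  have hGbmero : ∀ m, MeromorphicOn (Gb m) U := by
    intro m x hx
    apply meroAt_sum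
    intro nd _
    apply MeromorphicAt.mul (MeromorphicAt.const _ x)
    apply meroAt_prod
    intro t _
    exact ((MeromorphicAt.const _ x).sub ((hFan t x hx).meromorphicAt))
  -- identity theorem: a m = Ga m on punctured neighborhoods everywhere in U
  have hagood : ∀ m : Fin q, ∀ᶠ y in 𝓝[≠] z₀, a m y = Ga m y := by
    intro m
    have hfreq : ∃ᶠ y in 𝓝[≠] z₀, a m y - Ga m y = 0 := by
      apply hTfreq.mono
      intro y hy
      rw [sub_eq_zero]
      rw [← sumPoly_coeff q (fun m' => a m' y) m, hy.1, hGa_coeff y m]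
    have := mero_idThm hU hUconn.isPreconnected
      (fun x hx => ((hamero m x (Set.mem_univ x)).sub (hGamero m x hx))) hz₀U hfreq z₀ hz₀U
    exact this.mono (fun y hy => sub_eq_zero.1 hy)
  have hbgood : ∀ m : Fin (k-q), ∀ᶠ y in 𝓝[≠] z₀, b m y = Gb m y := by
    intro m
    have hfreq : ∃ᶠ y in 𝓝[≠] z₀, b m y - Gb m y = 0 := by
      apply hTfreq.mono
      intro y hy
      rw [sub_eq_zero]
      rw [← sumPoly_coeff (k-q) (fun m' => b m' y) m, hy.2, hGb_coeff y m]
    have := mero_idThm hU hUconn.isPreconnected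
      (fun x hx => ((hbmero m x (Set.mem_univ x)).sub (hGbmero m x hx))) hz₀U hfreq z₀ hz₀U
    exact this.mono (fun y hy => sub_eq_zero.1 hy)
  -- distinctness of the branches F i on punctured neighborhoods
  have hFnej : ∀ i j : Fin k, i ≠ j → ∀ᶠ y in 𝓝[≠] z₀, F i y ≠ F j y := by
    intro i j hij
    by_contra hcon
    rw [Filter.not_eventually] at hcon
    have hfreq : ∃ᶠ y in 𝓝[≠] z₀, (fun y => F i y - F j y) y = 0 := by
      apply hcon.mono
      intro y hy
      rw [not_not] at hy
      simp [hy]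
    have hzero : Set.EqOn (fun y => F i y - F j y) 0 U :=
      AnalyticOnNhd.eqOn_zero_of_preconnected_of_frequently_eq_zero
        (fun x hx => ((hFan i x hx).sub (hFan j x hx))) hUconn.isPreconnected hz₀U hfreq
    have hd1 : HasDerivAt (fun y => F i y - F j y) (w i z₀ - w j z₀) z₀ :=
      (hF i z₀ hz₀U).sub (hF j z₀ hz₀U)
    have hd0 : HasDerivAt (fun y => F i y - F j y) (0:ℂ) z₀ := by
      apply (hasDerivAt_const z₀ (0:ℂ)).congr_of_eventuallyEq
      filter_upwards [hU.mem_nhds hz₀U] with y hy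
      exact hzero hy
    have : w i z₀ - w j z₀ = 0 := hd1.unique hd0
    exact hij ((hroots z₀ hz₀U).1 (sub_eq_zero.1 this))
  -- assemble the big eventual statement and extract an open set Ω
  have hbig : ∀ᶠ y in 𝓝[≠] z₀, y ∈ U ∧ (∀ m : Fin q, a m y = Ga m y) ∧
      (∀ m : Fin (k-q), b m y = Gb m y) ∧ ∀ i j : Fin k, i ≠ j → F i y ≠ F j y := by
    have e1 : ∀ᶠ y in 𝓝[≠] z₀, y ∈ U := hUmem
    have e2 : ∀ᶠ y in 𝓝[≠] z₀, ∀ m : Fin q, a m y = Ga m y :=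
      Filter.eventually_all.2 hagood
    have e3 : ∀ᶠ y in 𝓝[≠] z₀, ∀ m : Fin (k-q), b m y = Gb m y :=
      Filter.eventually_all.2 hbgood
    have e4 : ∀ᶠ y in 𝓝[≠] z₀, ∀ i j : Fin k, i ≠ j → F i y ≠ F j y := by
      rw [Filter.eventually_all]
      intro i
      rw [Filter.eventually_all]
      intro j
      by_cases hij : i = j
      · exact Filter.Eventually.of_forall (fun y h => absurd hij h)
      · exact (hFnej i j hij).mono (fun y h _ => h)
    exact e1.and (e2.and (e3.and e4))
  obtain ⟨t, htprop, htopen, htz₀⟩ := eventually_nhds_iff.1 (eventually_nhdsWithin_iff.1 hbig)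
  set Ω : Set ℂ := t \ {z₀} with hΩdef
  have hΩopen : IsOpen Ω := htopen.sdiff isClosed_singleton
  have hΩmem : Ω ∈ 𝓝[≠] z₀ :=
    mem_nhdsWithin.2 ⟨t, htopen, htz₀, fun y hy => ⟨hy.1, hy.2⟩⟩
  have hΩne : Ω.Nonempty := Filter.nonempty_of_mem hΩmem
  have hΩprop : ∀ y ∈ Ω, y ∈ U ∧ (∀ m : Fin q, a m y = Ga m y) ∧
      (∀ m : Fin (k-q), b m y = Gb m y) ∧ ∀ i j : Fin k, i ≠ j → F i y ≠ F j y :=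
    fun y hy => htprop y hy.1 hy.2
  have hΩU : Ω ⊆ U := fun y hy => (hΩprop y hy).1
  -- analyticity of the coefficient functions on Ω
  have hGaan : ∀ m, AnalyticOnNhd ℂ (Ga m) Ω := by
    intro m x hx
    apply analyticAt_fsum
    intro nd _
    exact (analyticAt_const.mul (analyticAt_fprod _ _
      (fun t _ => analyticAt_const.sub (hFan t x (hΩU hx)))))
  have hGban : ∀ m, AnalyticOnNhd ℂ (Gb m) Ω := by
    intro m x hx
    apply analyticAt_fsum
    intro nd _
    exact (analyticAt_const.mul (analyticAt_fprod _ _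
      (fun t _ => analyticAt_const.sub (hFan t x (hΩU hx)))))
  have haan : ∀ m, AnalyticOnNhd ℂ (a m) Ω := by
    intro m
    exact AnalyticOnNhd.congr hΩopen (hGaan m) (fun y hy => ((hΩprop y hy).2.1 m).symm)
  have hban : ∀ m, AnalyticOnNhd ℂ (b m) Ω := by
    intro m
    exact AnalyticOnNhd.congr hΩopen (hGban m) (fun y hy => ((hΩprop y hy).2.2.1 m).symm)
  -- evaluation identities on Ω, in ascending-power form
  have hidA : ∀ y ∈ Ω, ∀ x : ℂ, x ^ q + ∑ i : Fin q, a (reflFin q i) y * x ^ (i:ℕ)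
      = ∏ t ∈ T, (x - F t y) := by
    intro y hy x
    have hpoly : sumPoly q (fun m => a m y) = ∏ t ∈ T, (X - C (F t y)) := by
      apply poly_eq_of_coeffs k q hq0 T hTcard
      intro m
      rw [(hΩprop y hy).2.1 m, hGa_coeff y m]
    have hev := congrArg (eval x) hpoly
    rw [sumPoly_eval, eval_prod] at hev
    have hre : ∑ i : Fin q, a (reflFin q i) y * x ^ (i:ℕ)
        = ∑ m : Fin q, a m y * x ^ (q - 1 - (m:ℕ)) := by
      rw [← sum_reflFin q (fun i => a (reflFin q i) y) x]
      exact Finset.sum_congr rfl (fun j _ => by rw [reflFin_invol])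
    rw [hre, hev]
    exact Finset.prod_congr rfl (fun t _ => by simp)
  have hidB : ∀ y ∈ Ω, ∀ x : ℂ, x ^ (k-q) + ∑ i : Fin (k-q), b (reflFin (k-q) i) y * x ^ (i:ℕ)
      = ∏ t ∈ Finset.univ \ T, (x - F t y) := by
    intro y hy x
    have hpoly : sumPoly (k-q) (fun m => b m y) = ∏ t ∈ Finset.univ \ T, (X - C (F t y)) := by
      apply poly_eq_of_coeffs k (k-q) hq'0 _ hT'card
      intro m
      rw [(hΩprop y hy).2.2.1 m, hGb_coeff y m]
    have hev := congrArg (eval x) hpoly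
    rw [sumPoly_eval, eval_prod] at hev
    have hre : ∑ i : Fin (k-q), b (reflFin (k-q) i) y * x ^ (i:ℕ)
        = ∑ m : Fin (k-q), b m y * x ^ (k - q - 1 - (m:ℕ)) := by
      rw [← sum_reflFin (k-q) (fun i => b (reflFin (k-q) i) y) x]
      exact Finset.sum_congr rfl (fun j _ => by rw [reflFin_invol])
    rw [hre, hev]
    exact Finset.prod_congr rfl (fun t _ => by simp)
  -- transfer to the derivatives
  obtain ⟨α, hαmero, hαid⟩ := main_transfer k q hq0 T hTcard
    (fun i => a (reflFin q i)) (fun i x => hamero (reflFin q i) x (Set.mem_univ x))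
    F w Ω hΩopen (fun i => haan (reflFin q i)) (fun j z hz => hF j z (hΩU hz))
    (fun z hz i _ j _ hij => (hΩprop z hz).2.2.2 i j hij) hidA
  obtain ⟨β, hβmero, hβid⟩ := main_transfer k (k-q) hq'0 (Finset.univ \ T) hT'card
    (fun i => b (reflFin (k-q) i)) (fun i x => hbmero (reflFin (k-q) i) x (Set.mem_univ x))
    F w Ω hΩopen (fun i => hban (reflFin (k-q) i)) (fun j z hz => hF j z (hΩU hz))
    (fun z hz i _ j _ hij => (hΩprop z hz).2.2.2 i j hij) hidB
  set a' : Fin q → ℂ → ℂ := fun j => α (reflFin q j) with ha'def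
  set b' : Fin (k-q) → ℂ → ℂ := fun j => β (reflFin (k-q) j) with hb'def
  -- the factorization of the A-polynomial holds on Ω
  have hfinΩ : ∀ y ∈ Ω, ∀ x : ℂ, x ^ k + ∑ j : Fin k, A j y * x ^ (k - 1 - (j:ℕ))
      = (x ^ q + ∑ j : Fin q, a' j y * x ^ (q - 1 - (j:ℕ))) *
        (x ^ (k-q) + ∑ j : Fin (k-q), b' j y * x ^ (k - q - 1 - (j:ℕ))) := by
    intro y hy x
    rw [(hroots y (hΩU hy)).2 x]
    rw [show ∑ j : Fin q, a' j y * x ^ (q - 1 - (j:ℕ))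
        = ∑ i : Fin q, α i y * x ^ (i:ℕ) from sum_reflFin q (fun i => α i y) x]
    rw [show ∑ j : Fin (k-q), b' j y * x ^ (k - q - 1 - (j:ℕ))
        = ∑ i : Fin (k-q), β i y * x ^ (i:ℕ) from sum_reflFin (k-q) (fun i => β i y) x]
    rw [hαid y hy x, hβid y hy x]
    rw [← Finset.prod_sdiff (Finset.subset_univ T)]
    ring
  obtain ⟨z₁, hz₁⟩ := hΩne
  -- per-node codiscrete vanishing
  have hnode : ∀ nd : Fin (k+1), ∀ᶠ y in Filter.codiscrete ℂ,
      (((nd:ℕ):ℂ)) ^ k + ∑ j : Fin k, A j y * (((nd:ℕ):ℂ)) ^ (k - 1 - (j:ℕ))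
        - ((((nd:ℕ):ℂ)) ^ q + ∑ j : Fin q, a' j y * (((nd:ℕ):ℂ)) ^ (q - 1 - (j:ℕ))) *
          ((((nd:ℕ):ℂ)) ^ (k-q) + ∑ j : Fin (k-q), b' j y * (((nd:ℕ):ℂ)) ^ (k - q - 1 - (j:ℕ)))
        = 0 := by
    intro nd
    apply mero_idThm_codiscrete (z₀ := z₁)
    · intro x _
      apply MeromorphicAt.sub
      · apply MeromorphicAt.add (MeromorphicAt.const _ x)
        exact meroAt_sum Finset.univ _
          (fun j _ => (hA j x (Set.mem_univ x)).mul (MeromorphicAt.const _ x))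
      · apply MeromorphicAt.mul
        · apply MeromorphicAt.add (MeromorphicAt.const _ x)
          exact meroAt_sum Finset.univ _
            (fun j _ => (hαmero (reflFin q j) x).mul (MeromorphicAt.const _ x))
        · apply MeromorphicAt.add (MeromorphicAt.const _ x)
          exact meroAt_sum Finset.univ _
            (fun j _ => (hβmero (reflFin (k-q) j) x).mul (MeromorphicAt.const _ x))
    · apply Filter.Eventually.frequently
      filter_upwards [nhdsWithin_le_nhds (hΩopen.mem_nhds hz₁)] with y hy
      rw [hfinΩ y hy (((nd:ℕ):ℂ))]
      ring
  have hall : ∀ᶠ y in Filter.codiscrete ℂ, ∀ nd : Fin (k+1),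
      (((nd:ℕ):ℂ)) ^ k + ∑ j : Fin k, A j y * (((nd:ℕ):ℂ)) ^ (k - 1 - (j:ℕ))
        - ((((nd:ℕ):ℂ)) ^ q + ∑ j : Fin q, a' j y * (((nd:ℕ):ℂ)) ^ (q - 1 - (j:ℕ))) *
          ((((nd:ℕ):ℂ)) ^ (k-q) + ∑ j : Fin (k-q), b' j y * (((nd:ℕ):ℂ)) ^ (k - q - 1 - (j:ℕ)))
        = 0 := Filter.eventually_all.2 hnode
  apply hirr
  refine ⟨q, hq0, hqk, a', b',
    (fun j x _ => hαmero (reflFin q j) x), (fun j x _ => hβmero (reflFin (k-q) j) x), ?_⟩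
  apply hall.mono
  intro y hy xx
  have hpoly : sumPoly k (fun j => A j y)
      = sumPoly q (fun j => a' j y) * sumPoly (k-q) (fun j => b' j y) := by
    rw [← sub_eq_zero]
    apply Polynomial.eq_zero_of_natDegree_lt_card_of_eval_eq_zero' _
      ((Finset.range (k+1)).image (fun n : ℕ => (n:ℂ)))
    · intro i hi
      obtain ⟨n, hn, rfl⟩ := Finset.mem_image.1 hi
      rw [Finset.mem_range] at hn
      have hnd := hy ⟨n, hn⟩
      rw [eval_sub, eval_mul, sumPoly_eval, sumPoly_eval, sumPoly_eval, sub_eq_zero]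
      exact sub_eq_zero.1 hnd
    · rw [Finset.card_image_of_injective _ (Nat.cast_injective), Finset.card_range]
      apply Nat.lt_succ_of_le
      apply le_trans (Polynomial.natDegree_sub_le _ _)
      apply max_le
      · exact le_of_eq (sumPoly_natDegree k (by omega) _)
      · apply le_trans (Polynomial.natDegree_mul_le)
        rw [sumPoly_natDegree q hq0, sumPoly_natDegree (k-q) hq'0]
        omega
  have := congrArg (eval xx) hpoly
  rwa [eval_mul, sumPoly_eval, sumPoly_eval, sumPoly_eval] at this
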